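/- Let G be a finite simple graph with at least three vertices, and let e = {s, t} be an edge of G. Let G' be the graph obtained from G by deleting the edge e and adding two new vertices s' and t' together with the two new edges {s, s'} and {t, t'}. Then G has a Hamiltonian cycle containing the edge e if and only if G' has a Hamiltonian path from s' to t'. -/

import Mathlib

/-- The graph `G'` obtained from `G` by deleting the edge `{s, t}` and adding two new
vertices `s' = Sum.inr 0` and `t' = Sum.inr 1` together with the new edges `{s, s'}` and
`{t, t'}`. -/
def ExtGraph {V : Type*} (G : SimpleGraph V) (s t : V) : SimpleGraph (V ⊕ Fin 2) :=
  SimpleGraph.fromRel (fun x y =>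
    (∃ u v : V, x = Sum.inl u ∧ y = Sum.inl v ∧ G.Adj u v ∧
      ¬(u = s ∧ v = t) ∧ ¬(u = t ∧ v = s)) ∨
    (x = Sum.inl s ∧ y = Sum.inr 0) ∨ (x = Sum.inl t ∧ y = Sum.inr 1))

open SimpleGraph Walk

section Aux

variable {V : Type*} [DecidableEq V] {G : SimpleGraph V} {s t : V}

lemma count_map_inl' {α β : Type*} [DecidableEq α] [DecidableEq β] (l : List α) (f : α → β)
    (hf : Function.Injective f) (x : α) : (l.map f).count (f x) = l.count x := by
  induction l with
  | nil => simp
  | cons a l ih => simp [List.count_cons, ih, beq_iff_eq, hf.eq_iff]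

section DC
variable {α : Type*} [DecidableEq α]

lemma dc_cons_self (a : α) (l : List α) : (a :: l).count a = l.count a + 1 := by
  simp [List.count_cons]

lemma dc_cons_of_ne {a b : α} (h : a ≠ b) (l : List α) : (b :: l).count a = l.count a := by
  simp [List.count_cons, h.symm]

lemma dc_append (a : α) (l₁ l₂ : List α) : (l₁ ++ l₂).count a = l₁.count a + l₂.count a :=
  List.count_append

lemma dc_eq_zero_of_not_mem {a : α} {l : List α} (h : a ∉ l) : l.count a = 0 :=
  List.count_eq_zero_of_not_mem h

lemma dc_singleton (a : α) : [a].count a = 1 := by simp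

lemma dc_reverse (a : α) (l : List α) : l.reverse.count a = l.count a := by
  simp

end DC

lemma ext_adj_inl {u v : V} (h : G.Adj u v) (hne : s(u, v) ≠ s(s, t)) :
    (ExtGraph G s t).Adj (Sum.inl u) (Sum.inl v) := by
  refine ⟨by simpa using h.ne, Or.inl (Or.inl ⟨u, v, rfl, rfl, h, ?_, ?_⟩)⟩
  · rintro ⟨rfl, rfl⟩; exact hne rfl
  · rintro ⟨rfl, rfl⟩; exact hne (Sym2.eq_swap)

lemma ext_adj_s : (ExtGraph G s t).Adj (Sum.inr 0) (Sum.inl s) := by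
  exact ⟨by simp, Or.inr (Or.inr (Or.inl ⟨rfl, rfl⟩))⟩

lemma ext_adj_t : (ExtGraph G s t).Adj (Sum.inl t) (Sum.inr 1) := by
  exact ⟨by simp, Or.inl (Or.inr (Or.inr ⟨rfl, rfl⟩))⟩

lemma ext_adj_inr0 {y : V ⊕ Fin 2} (h : (ExtGraph G s t).Adj (Sum.inr 0) y) :
    y = Sum.inl s := by
  obtain ⟨-, h | h⟩ := h <;>
    rcases h with ⟨u, v, h1, h2, -⟩ | ⟨h1, h2⟩ | ⟨h1, h2⟩ <;> simp_all

lemma ext_adj_inr1 {y : V ⊕ Fin 2} (h : (ExtGraph G s t).Adj (Sum.inr 1) y) :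
    y = Sum.inl t := by
  obtain ⟨-, h | h⟩ := h <;>
    rcases h with ⟨u, v, h1, h2, -⟩ | ⟨h1, h2⟩ | ⟨h1, h2⟩ <;> simp_all

lemma ext_adj_inl_inl {u v : V} (h : (ExtGraph G s t).Adj (Sum.inl u) (Sum.inl v)) :
    G.Adj u v ∧ s(u, v) ≠ s(s, t) := by
  obtain ⟨hne, h | h⟩ := h
  · rcases h with ⟨u', v', h1, h2, hadj, hn1, hn2⟩ | ⟨h1, h2⟩ | ⟨h1, h2⟩
    · obtain rfl : u = u' := Sum.inl_injective h1
      obtain rfl : v = v' := Sum.inl_injective h2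
      refine ⟨hadj, fun he => ?_⟩
      rcases Sym2.eq_iff.mp he with ⟨rfl, rfl⟩ | ⟨rfl, rfl⟩
      · exact hn1 ⟨rfl, rfl⟩
      · exact hn2 ⟨rfl, rfl⟩
    · exact absurd h2 (by simp)
    · exact absurd h2 (by simp)
  · rcases h with ⟨u', v', h1, h2, hadj, hn1, hn2⟩ | ⟨h1, h2⟩ | ⟨h1, h2⟩
    · obtain rfl : v = u' := Sum.inl_injective h1
      obtain rfl : u = v' := Sum.inl_injective h2
      refine ⟨hadj.symm, fun he => ?_⟩
      rcases Sym2.eq_iff.mp he with ⟨rfl, rfl⟩ | ⟨rfl, rfl⟩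
      · exact hn2 ⟨rfl, rfl⟩
      · exact hn1 ⟨rfl, rfl⟩
    · exact absurd h2 (by simp)
    · exact absurd h2 (by simp)

/-- Push a walk of `G` avoiding the edge `{s,t}` into `ExtGraph G s t`. -/
lemma ext_push {a b : V} (P : G.Walk a b) (hP : s(s, t) ∉ P.edges) :
    ∃ m : (ExtGraph G s t).Walk (Sum.inl a) (Sum.inl b),
      m.support = P.support.map Sum.inl := by
  induction P with
  | nil => exact ⟨Walk.nil, by simp⟩
  | cons h P ih =>
    simp only [Walk.edges_cons, List.mem_cons, not_or] at hP
    obtain ⟨m, hm⟩ := ih hP.2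
    exact ⟨Walk.cons (ext_adj_inl h (fun he => hP.1 he.symm)) m, by simp [hm]⟩

/-- Pull a walk of `ExtGraph G s t` through left vertices back to `G`. -/
lemma ext_pull {x y : V ⊕ Fin 2} (m : (ExtGraph G s t).Walk x y) :
    ∀ {a b : V}, x = Sum.inl a → y = Sum.inl b → (∀ v ∈ m.support, v.isLeft) →
      ∃ q : G.Walk a b, q.support.map Sum.inl = m.support ∧ s(s, t) ∉ q.edges := by
  induction m with
  | nil =>
    rintro a b rfl hy -
    obtain rfl : a = b := by simpa using hy
    exact ⟨Walk.nil, by simp, by simp⟩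
  | @cons x' y' z' h m ih =>
    rintro a b rfl hy hall
    have hy' : y'.isLeft := hall y'
      (by rw [Walk.support_cons]; exact List.mem_cons_of_mem _ m.start_mem_support)
    obtain ⟨c, hc⟩ := Sum.isLeft_iff.mp hy'
    subst hc
    obtain ⟨hGadj, hne⟩ := ext_adj_inl_inl h
    obtain ⟨q, hq1, hq2⟩ := ih rfl hy (fun v hv => hall v (by simp [Walk.support_cons, hv]))
    refine ⟨Walk.cons hGadj q, by simp [hq1], ?_⟩
    simp only [Walk.edges_cons, List.mem_cons, not_or]
    exact ⟨fun he => hne he.symm, hq2⟩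

/-- In a path starting at `s` containing the edge `{s,t}`, that edge comes first. -/
lemma ext_first_edge {x : V} (r : G.Walk s x) (hr : r.IsPath) (he : s(s, t) ∈ r.edges) :
    ∃ (h3 : G.Adj s t) (r' : G.Walk t x), r = Walk.cons h3 r' := by
  cases r with
  | nil => simp at he
  | cons h3 r' =>
    rename_i y
    rw [Walk.edges_cons, List.mem_cons] at he
    rcases he with he | he
    · rw [Sym2.eq_iff] at he
      obtain rfl : y = t := by
        rcases he with ⟨-, rfl⟩ | ⟨rfl, rfl⟩
        · rfl
        · rfl
      exact ⟨h3, r', rfl⟩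
    · exfalso
      have hs : s ∈ r'.support := r'.fst_mem_support_of_mem_edges he
      have := hr.support_nodup
      rw [Walk.support_cons] at this
      exact (List.nodup_cons.mp this).1 hs

/-- From a Hamiltonian cycle at `s` containing the edge `{s,t}`, extract a Hamiltonian
path from `s` to `t` avoiding the edge `{s,t}`. -/
lemma ext_ham_path (c : G.Walk s s) (hc : c.IsHamiltonianCycle) (he : s(s, t) ∈ c.edges) :
    ∃ P : G.Walk s t, P.IsHamiltonian ∧ s(s, t) ∉ P.edges := by
  cases c with
  | nil => simp at he
  | cons h q =>
    rename_i w
    obtain ⟨hqpath, hqe⟩ := (Walk.cons_isCycle_iff q h).mp hc.isCycle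
    have hqham : ∀ v, q.support.count v = 1 := by
      intro v
      have := hc.isHamiltonian_tail v
      rwa [Walk.support_tail_of_not_nil _ hc.isCycle.not_nil, Walk.support_cons, List.tail_cons] at this
    by_cases hw : w = t
    · subst hw
      refine ⟨q.reverse, fun v => by simpa using hqham v, ?_⟩
      rw [Walk.edges_reverse, List.mem_reverse]
      exact hqe
    · have hst' : s(s, t) ≠ s(s, w) := by
        intro heq
        rcases Sym2.eq_iff.mp heq with ⟨-, ht⟩ | ⟨hs, ht⟩
        · exact hw ht.symm
        · exact hw (hs.symm.trans ht.symm)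
      have heq : s(s, t) ∈ q.edges := by
        rw [Walk.edges_cons, List.mem_cons] at he
        exact he.resolve_left hst'
      obtain ⟨h3, r, hqr⟩ := ext_first_edge q.reverse hqpath.reverse
        (by rw [Walk.edges_reverse, List.mem_reverse]; exact heq)
      have hq : q = r.reverse.append (Walk.cons h3.symm Walk.nil) := by
        have := congrArg Walk.reverse hqr
        rwa [Walk.reverse_reverse, Walk.reverse_cons] at this
      have hqsup : q.support = r.support.reverse ++ [s] := by
        have h0 := congrArg Walk.support hqr
        rw [Walk.support_reverse, Walk.support_cons] at h0
        have h2' := congrArg List.reverse h0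
        rwa [List.reverse_reverse, List.reverse_cons] at h2'
      refine ⟨Walk.cons h r.reverse, fun v => ?_, ?_⟩
      · have hcount := hqham v
        rw [hqsup, List.count_append] at hcount
        rw [Walk.support_cons, Walk.support_reverse]
        by_cases hvs : v = s
        · subst hvs
          rw [List.count_cons_self]
          simpa using hcount
        · rw [List.count_cons_of_ne (Ne.symm hvs)]
          have h0 : List.count v [s] = 0 := by
            simp [List.count_singleton, Ne.symm hvs]
          rw [h0] at hcount
          simpa using hcount
      · rw [Walk.edges_cons, List.mem_cons]
        rintro (he' | he')
        · exact hst' he'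
        · rw [Walk.edges_reverse, List.mem_reverse] at he'
          have hnd := hqpath.reverse.edges_nodup
          rw [hqr, Walk.edges_cons, List.nodup_cons] at hnd
          exact hnd.1 he'

end Aux

/-- Let `G` be a finite simple graph with at least three vertices and let `{s, t}` be an
edge of `G`. Then `G` has a Hamiltonian cycle containing the edge `{s, t}` if and only
if the modified graph `G'` has a Hamiltonian path from `s'` to `t'`. -/
theorem stmt_13 {V : Type*} [Fintype V] [DecidableEq V] (G : SimpleGraph V)
    (hV : 3 ≤ Fintype.card V) (s t : V) (hst : G.Adj s t) :
    (∃ (v : V) (c : G.Walk v v), c.IsHamiltonianCycle ∧ s(s, t) ∈ c.edges) ↔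
    ∃ p : (ExtGraph G s t).Walk (Sum.inr 0) (Sum.inr 1), p.IsHamiltonian := by
  constructor
  · rintro ⟨v, c, hc, he⟩
    -- rotate the cycle to start at `s`
    have hs : s ∈ c.support := hc.mem_support s
    set c2 := c.rotate s hs with hc2
    have hc2cyc : c2.IsCycle := hc.isCycle.rotate hs
    have hc2ham : c2.IsHamiltonianCycle := by
      rw [Walk.isHamiltonianCycle_iff_isCycle_and_support_count_tail_eq_one]
      refine ⟨hc2cyc, fun a => ?_⟩
      have hperm : List.Perm c2.support.tail c.support.tail :=
        (Walk.support_rotate c s hs).perm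
      rw [hperm.count_eq]
      exact (Walk.isHamiltonianCycle_iff_isCycle_and_support_count_tail_eq_one.mp hc).2 a
    have he2 : s(s, t) ∈ c2.edges := by
      rw [(Walk.rotate_edges c s hs).perm.mem_iff]
      exact he
    obtain ⟨P, hPham, hPe⟩ := ext_ham_path c2 hc2ham he2
    obtain ⟨m, hm⟩ := ext_push (s := s) (t := t) P hPe
    refine ⟨Walk.cons ext_adj_s (m.append (Walk.cons ext_adj_t Walk.nil)), fun x => ?_⟩
    have hsup : (Walk.cons ext_adj_s (m.append (Walk.cons ext_adj_t Walk.nil))).support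
        = Sum.inr 0 :: (P.support.map Sum.inl ++ [Sum.inr 1]) := by
      rw [Walk.support_cons, Walk.support_append, hm]
      simp
    rw [hsup]
    rcases x with x | i
    · rw [dc_cons_of_ne (show (Sum.inl x : V ⊕ Fin 2) ≠ Sum.inr 0 by simp),
        dc_append, count_map_inl' P.support Sum.inl Sum.inl_injective x,
        dc_eq_zero_of_not_mem (l := [Sum.inr 1]) (by simp), hPham x]
    · obtain rfl | rfl : i = 0 ∨ i = 1 := by omega
      · rw [dc_cons_self, dc_append,
          dc_eq_zero_of_not_mem (l := List.map Sum.inl P.support) (by simp),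
          dc_eq_zero_of_not_mem (l := [Sum.inr 1]) (by simp)]
      · rw [dc_cons_of_ne (show (Sum.inr 1 : V ⊕ Fin 2) ≠ Sum.inr 0 by simp),
          dc_append,
          dc_eq_zero_of_not_mem (l := List.map Sum.inl P.support) (by simp),
          dc_singleton]
  · rintro ⟨p, hp⟩
    have hppath : p.IsPath := hp.isPath
    obtain ⟨x, h1, p1, rfl⟩ := Walk.exists_eq_cons_of_ne (by simp) p
    obtain rfl : x = Sum.inl s := ext_adj_inr0 h1
    have hp1path : p1.IsPath := hppath.of_cons
    obtain ⟨y, h2, p2, hp1r⟩ := Walk.exists_eq_cons_of_ne (by simp) p1.reverse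
    obtain rfl : y = Sum.inl t := ext_adj_inr1 h2
    have hp1sup : p1.support = p2.support.reverse ++ [Sum.inr 1] := by
      have h0 := congrArg Walk.support hp1r
      rw [Walk.support_reverse, Walk.support_cons] at h0
      have h2' := congrArg List.reverse h0
      rwa [List.reverse_reverse, List.reverse_cons] at h2'
    -- the middle walk
    set m := p2.reverse with hmdef
    have hmsup : m.support = p2.support.reverse := Walk.support_reverse p2
    have hnr0 : (Sum.inr 0 : V ⊕ Fin 2) ∉ p1.support := by
      have := hppath.support_nodup
      rw [Walk.support_cons] at this
      exact (List.nodup_cons.mp this).1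
    have hnr1 : (Sum.inr 1 : V ⊕ Fin 2) ∉ p2.support := by
      have := hp1path.reverse.support_nodup
      rw [hp1r, Walk.support_cons] at this
      exact (List.nodup_cons.mp this).1
    have hall : ∀ v ∈ m.support, v.isLeft := by
      intro v hv
      rw [hmsup, List.mem_reverse] at hv
      rcases v with v | i
      · rfl
      · exfalso
        fin_cases i
        · exact hnr0 (by rw [hp1sup]; exact List.mem_append_left _ (by simpa using hv))
        · exact hnr1 hv
    obtain ⟨q, hq1, hq2⟩ := ext_pull m rfl rfl hall
    have hqham : ∀ v, q.support.count v = 1 := by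
      intro v
      have hcount := hp (Sum.inl v)
      rw [Walk.support_cons, hp1sup,
        dc_cons_of_ne (show (Sum.inl v : V ⊕ Fin 2) ≠ Sum.inr 0 by simp),
        dc_append,
        dc_eq_zero_of_not_mem (l := [Sum.inr 1]) (by simp)] at hcount
      rw [← count_map_inl' q.support (Sum.inl : V → V ⊕ Fin 2) Sum.inl_injective v, hq1, hmsup]
      simpa using hcount
    have hqpath : q.IsPath := Walk.IsHamiltonian.isPath hqham
    refine ⟨s, Walk.cons hst q.reverse, ?_, by simp⟩
    rw [Walk.isHamiltonianCycle_iff_isCycle_and_support_count_tail_eq_one]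
    constructor
    · rw [Walk.cons_isCycle_iff]
      refine ⟨hqpath.reverse, ?_⟩
      rw [Walk.edges_reverse, List.mem_reverse]
      exact hq2
    · intro a
      rw [Walk.support_cons, List.tail_cons, Walk.support_reverse, dc_reverse]
      exact hqham a
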